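/- With X := (u₁−u)(u₋₁−u₋₂)/((u₁−u₋₁)(u−u₋₂)), X₁ := (u₂−u₁)(u−u₋₁)/((u₂−u)(u₁−u₋₁)), and Y := (u₁−u)(u−u₋₁)/(u₁−u₋₁), the right-hand side of lattice equation (a), namely 2[ 1/(2/(u₂−u)+1/(u−u₁)+1/(u−u₋₁)) − 1/(2/(u₋₂−u)+1/(u−u₁)+1/(u−u₋₁)) ], equals 4Y(1−X−X₁)/((2X−1)(2X₁−1)) as rational functions, wherever all denominators are nonzero. -/

import Mathlib

/-- Expression of lattice equation (a) through the Möbius invariants X, X₁, Y: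
the right-hand side equals 4Y(1−X−X₁)/((2X−1)(2X₁−1)). -/
theorem stmt11 (um2 um1 u u1 u2 X X1 Y : ℝ)
    (hX : X = (u1 - u) * (um1 - um2) / ((u1 - um1) * (u - um2)))
    (hX1 : X1 = (u2 - u1) * (u - um1) / ((u2 - u) * (u1 - um1)))
    (hY : Y = (u1 - u) * (u - um1) / (u1 - um1))
    (h2 : u2 - u ≠ 0) (hm2 : um2 - u ≠ 0) (h1 : u - u1 ≠ 0) (hm1 : u - um1 ≠ 0)
    (h11 : u1 - um1 ≠ 0) (h02 : u - um2 ≠ 0)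
    (hS1 : 2 / (u2 - u) + 1 / (u - u1) + 1 / (u - um1) ≠ 0)
    (hS2 : 2 / (um2 - u) + 1 / (u - u1) + 1 / (u - um1) ≠ 0)
    (hX' : 2 * X - 1 ≠ 0) (hX1' : 2 * X1 - 1 ≠ 0) :
    2 * (1 / (2 / (u2 - u) + 1 / (u - u1) + 1 / (u - um1))
        - 1 / (2 / (um2 - u) + 1 / (u - u1) + 1 / (u - um1)))
      = 4 * Y * (1 - X - X1) / ((2 * X - 1) * (2 * X1 - 1)) := by
  -- polynomial denominators
  set N1 : ℝ := 2 * (u - u1) * (u - um1) + (u2 - u) * (u - um1) + (u2 - u) * (u - u1) with hN1def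
  set N2 : ℝ := (u - um2) * ((u - u1) + (u - um1)) - 2 * (u - u1) * (u - um1) with hN2def
  have hs1 : 2 / (u2 - u) + 1 / (u - u1) + 1 / (u - um1)
      = N1 / ((u2 - u) * ((u - u1) * (u - um1))) := by
    rw [hN1def]; field_simp
  have hs2 : 2 / (um2 - u) + 1 / (u - u1) + 1 / (u - um1)
      = N2 / ((u - um2) * ((u - u1) * (u - um1))) := by
    rw [hN2def]; field_simp; ring
  have hN1 : N1 ≠ 0 := by
    intro h; apply hS1; rw [hs1, h, zero_div]
  have hN2 : N2 ≠ 0 := by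
    intro h; apply hS2; rw [hs2, h, zero_div]
  -- rewrite X-expressions as single fractions
  have r1 : 2 * X - 1 = -N2 / ((u1 - um1) * (u - um2)) := by
    rw [hX, hN2def]; field_simp; ring
  have r2 : 2 * X1 - 1 = N1 / ((u2 - u) * (u1 - um1)) := by
    rw [hX1, hN1def]; field_simp; ring
  have r4 : 1 - X - X1
      = -((u - u1) * (u - um1) * ((u2 - u) + (u - um2)))
        / ((u2 - u) * ((u - um2) * (u1 - um1))) := by
    rw [hX, hX1]; field_simp; ring
  rw [hs1, hs2, one_div_div, one_div_div, r1, r2, r4, hY]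
  rw [div_sub_div _ _ hN1 hN2]
  field_simp
  ring
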